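/- Let n ≥ 3 be an odd integer and let m ≥ 3 be an integer such that either m is odd or m ≥ n. Then there exists a function h : E(C⃗_m) → {C⃗_n, C⃖_n} such that C⃗_m ⊗_h {C⃗_n, C⃖_n} ≅ C⃗_{mn}. -/

import Mathlib

open Finset

/-- The arc set of the product `D ⊗_h Γ`, where `D` has arc set `A` and `h` assigns to
each arc of `D` a digraph on a vertex set contained in `ℤ`:
`((a,i),(b,j))` is an arc iff `(a,b) ∈ A` and `(i,j) ∈ h (a,b)`. -/
def prodArcs {α : Type*} [DecidableEq α] (A : Finset (α × α))
    (h : α × α → Finset (ℤ × ℤ)) : Finset ((α × ℤ) × (α × ℤ)) :=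
  A.biUnion fun ab => (h ab).image fun ij => ((ab.1, ij.1), (ab.2, ij.2))

/-- Isomorphism of digraphs given by vertex sets and arc sets. -/
def DigraphIso {β γ : Type*} [DecidableEq β] [DecidableEq γ]
    (V1 : Finset β) (A1 : Finset (β × β)) (V2 : Finset γ) (A2 : Finset (γ × γ)) : Prop :=
  ∃ φ : β → γ, Set.InjOn φ ↑V1 ∧ V1.image φ = V2 ∧ A1.image (Prod.map φ φ) = A2

/-- The arc set of the strongly oriented cycle `C⃗_n` on the vertex set `[1,n] ⊆ ℤ`:
arcs `i → i+1` (and `n → 1`). -/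
noncomputable def forwardCycle (n : ℕ) : Finset (ℤ × ℤ) :=
  (Finset.Icc (1 : ℤ) (n : ℤ)).image fun i => (i, if i = (n : ℤ) then 1 else i + 1)

/-- The arc set of the reverse strong orientation `C⃖_n` of the cycle `C_n` on the
vertex set `[1,n] ⊆ ℤ`. -/
noncomputable def backwardCycle (n : ℕ) : Finset (ℤ × ℤ) :=
  (Finset.Icc (1 : ℤ) (n : ℤ)).image fun i => (if i = (n : ℤ) then 1 else i + 1, i)

/-- The arc set of the disjoint union of `c` copies of the strongly oriented cycle
`C⃗_L`, on the vertex set `[1,c] × [1,L] ⊆ ℤ × ℤ`. -/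
noncomputable def unionCycles (c L : ℕ) : Finset ((ℤ × ℤ) × (ℤ × ℤ)) :=
  ((Finset.Icc (1 : ℤ) (c : ℤ)) ×ˢ (Finset.Icc (1 : ℤ) (L : ℤ))).image
    fun x => (x, (x.1, if x.2 = (L : ℤ) then 1 else x.2 + 1))


lemma mem_fwd {N : ℕ} {x y : ℤ} :
    (x, y) ∈ forwardCycle N ↔ (1 ≤ x ∧ x ≤ N) ∧ y = (if x = (N:ℤ) then 1 else x + 1) := by
  simp only [forwardCycle, Finset.mem_image, Finset.mem_Icc, Prod.mk.injEq]
  constructor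
  · rintro ⟨i, hi, rfl, rfl⟩; exact ⟨hi, rfl⟩
  · rintro ⟨hx, rfl⟩; exact ⟨x, hx, rfl, rfl⟩

lemma mem_bwd {N : ℕ} {x y : ℤ} :
    (x, y) ∈ backwardCycle N ↔ (1 ≤ y ∧ y ≤ N) ∧ x = (if y = (N:ℤ) then 1 else y + 1) := by
  simp only [backwardCycle, Finset.mem_image, Finset.mem_Icc, Prod.mk.injEq]
  constructor
  · rintro ⟨i, hi, rfl, rfl⟩; exact ⟨hi, rfl⟩
  · rintro ⟨hy, rfl⟩; exact ⟨y, hy, rfl, rfl⟩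

lemma card_fwd (N : ℕ) : (forwardCycle N).card = N := by
  rw [forwardCycle, Finset.card_image_of_injOn, Int.card_Icc]
  · simp
  · intro i _ j _ h
    exact congrArg Prod.fst h

lemma card_bwd (N : ℕ) : (backwardCycle N).card = N := by
  rw [backwardCycle, Finset.card_image_of_injOn, Int.card_Icc]
  · simp
  · intro i _ j _ h
    exact congrArg Prod.snd h



def gf (k a : ℤ) : ℤ := 2 * min (a - 1) k - (a - 1)

noncomputable def phi (m n k t : ℤ) (p : ℤ × ℤ) : ℤ :=
  p.1 + m * ((p.2 - 1 - gf k p.1) * t % n)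

-- basic emod bounds
lemma Qbounds (n x : ℤ) (hn : 0 < n) : 0 ≤ x % n ∧ x % n ≤ n - 1 :=
  ⟨Int.emod_nonneg x hn.ne', by have := Int.emod_lt_of_pos x hn; omega⟩

-- congruence: n ∣ (y - x) → y * t % n = x * t % n
lemma emod_mul_congr {n x y t : ℤ} (h : n ∣ y - x) : y * t % n = x * t % n := by
  have h2 : n ∣ y * t - x * t := by
    have := Dvd.dvd.mul_right h t
    rwa [sub_mul] at this
  exact (Int.modEq_iff_dvd.mpr h2).symm

-- injectivity core: from n ∣ (i - j) * t and s*t ≡ 1 mod n get n ∣ i - j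
lemma dvd_of_mul_inv {n s t i j : ℤ} (hst : n ∣ s * t - 1) (h : n ∣ (i - j) * t) :
    n ∣ i - j := by
  have h1 : n ∣ (i - j) * t * s := (Dvd.dvd.mul_right h s)
  have h2 : n ∣ (i - j) * (s * t - 1) := Dvd.dvd.mul_left hst (i - j)
  have : (i - j) = (i - j) * t * s - (i - j) * (s * t - 1) := by ring
  rw [this]
  exact dvd_sub h1 h2



lemma emod_congr {n x y : ℤ} (h : n ∣ y - x) : y % n = x % n :=
  (Int.modEq_iff_dvd.mpr h).symm

lemma dvd_of_three {N d : ℤ} (h : d = 0 ∨ d = N ∨ d = -N) : N ∣ d := by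
  rcases h with h | h | h <;> rw [h] <;> simp

lemma phi_step (m n : ℕ) (k t : ℤ) (hm : 3 ≤ m) (hn : 3 ≤ n) (hk0 : 0 ≤ k)
    (hkm : k ≤ (m:ℤ)) (hst : (n:ℤ) ∣ (2*k - m) * t - 1)
    (a i j : ℤ) (ha1 : 1 ≤ a) (ham : a ≤ (m:ℤ)) (hi1 : 1 ≤ i) (hin : i ≤ (n:ℤ))
    (hrel : (a ≤ k ∧ (j = i + 1 ∨ (i = (n:ℤ) ∧ j = 1))) ∨
            (k < a ∧ (i = j + 1 ∨ (j = (n:ℤ) ∧ i = 1)))) :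
    phi m n k t (if a = (m:ℤ) then 1 else a + 1, j)
      = if phi m n k t (a, i) = (m:ℤ) * n then 1 else phi m n k t (a, i) + 1 := by
  have hN : (0:ℤ) < (n:ℤ) := by exact_mod_cast by omega
  have hM : (0:ℤ) < (m:ℤ) := by exact_mod_cast by omega
  set N := (n:ℤ) with hNdef
  set M := (m:ℤ) with hMdef
  set X := (i - 1 - gf k a) * t with hX
  have hQ0 : 0 ≤ X % N := Int.emod_nonneg X hN.ne'
  have hQ1 : X % N ≤ N - 1 := by have := Int.emod_lt_of_pos X hN; omega
  by_cases ham' : a = M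
  · -- wrap-around column
    subst ham'
    rw [if_pos rfl]
    have key : (j - 1 - gf k 1) * t % N = (X + 1) % N := by
      have h1 : (j - 1 - gf k 1) * t % N = ((i - 1 - gf k M) + (2*k - M)) * t % N := by
        apply emod_mul_congr
        apply dvd_of_three
        unfold gf
        rcases hrel with ⟨h1, h2 | ⟨h2, h3⟩⟩ | ⟨h1, h2 | ⟨h2, h3⟩⟩ <;> omega
      rw [h1]
      apply emod_congr
      have : ((i - 1 - gf k M) + (2*k - M)) * t - (X + 1) = (2*k - M) * t - 1 := by
        rw [hX]; ring
      rw [this]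
      exact hst
    rw [phi, phi]; dsimp only
    rw [key]
    have hXQ : (X + 1) % N = (X % N + 1) % N := by
      apply emod_congr
      have : N ∣ X - X % N := Int.dvd_self_sub_of_emod_eq rfl
      have h2 : X + 1 - (X % N + 1) = X - X % N := by ring
      rw [h2]; exact this
    rw [hXQ]
    by_cases hQtop : X % N = N - 1
    · rw [if_pos (by rw [hQtop]; ring)]
      rw [hQtop]
      have : (N - 1 + 1) % N = 0 := by
        simp [sub_add_cancel, Int.emod_self]
      rw [this]; ring
    · rw [if_neg ?_]
      · rw [Int.emod_eq_of_lt (by omega) (by omega)]; ring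
      · intro hcon
        have : M * (N - 1 - X % N) = 0 := by linarith [hcon]
        have h2 : N - 1 - X % N ≥ 1 := by omega
        nlinarith
  · -- interior column
    rw [if_neg ham']
    have key : (j - 1 - gf k (a+1)) * t % N = X % N := by
      apply emod_mul_congr
      apply dvd_of_three
      unfold gf
      rcases hrel with ⟨h1, h2 | ⟨h2, h3⟩⟩ | ⟨h1, h2 | ⟨h2, h3⟩⟩ <;> omega
    rw [phi, phi]; dsimp only
    rw [key]
    rw [if_neg ?_]
    · ring
    · intro hcon
      have ham2 : a ≤ M - 1 := by omega
      nlinarith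



lemma phi_injOn (m n : ℕ) (k t : ℤ) (hm : 3 ≤ m) (hn : 3 ≤ n)
    (hst : (n:ℤ) ∣ (2*k - m) * t - 1) :
    Set.InjOn (phi m n k t)
      ↑(Finset.Icc (1 : ℤ) (m : ℤ) ×ˢ Finset.Icc (1 : ℤ) (n : ℤ)) := by
  have hN : (0:ℤ) < (n:ℤ) := by exact_mod_cast by omega
  have hM : (0:ℤ) < (m:ℤ) := by exact_mod_cast by omega
  rintro ⟨a, i⟩ hp ⟨b, j⟩ hq heq
  simp only [Finset.coe_product, Set.mem_prod, Finset.mem_coe, Finset.mem_Icc] at hp hq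
  obtain ⟨⟨ha1, ha2⟩, hi1, hi2⟩ := hp
  obtain ⟨⟨hb1, hb2⟩, hj1, hj2⟩ := hq
  simp only [phi] at heq
  set X := (i - 1 - gf k a) * t with hX
  set Y := (j - 1 - gf k b) * t with hY
  have hQX : 0 ≤ X % (n:ℤ) ∧ X % (n:ℤ) ≤ (n:ℤ) - 1 :=
    ⟨Int.emod_nonneg X hN.ne', by have := Int.emod_lt_of_pos X hN; omega⟩
  have hQY : 0 ≤ Y % (n:ℤ) ∧ Y % (n:ℤ) ≤ (n:ℤ) - 1 :=
    ⟨Int.emod_nonneg Y hN.ne', by have := Int.emod_lt_of_pos Y hN; omega⟩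
  have hQeq : X % (n:ℤ) = Y % (n:ℤ) := by
    by_contra hne
    rcases lt_or_gt_of_ne hne with hlt | hlt
    · have h1 : (m:ℤ) * (Y % (n:ℤ) - X % (n:ℤ)) = a - b := by linarith
      have h2 : (1:ℤ) ≤ Y % (n:ℤ) - X % (n:ℤ) := by omega
      nlinarith
    · have h1 : (m:ℤ) * (X % (n:ℤ) - Y % (n:ℤ)) = b - a := by linarith
      have h2 : (1:ℤ) ≤ X % (n:ℤ) - Y % (n:ℤ) := by omega
      nlinarith
  have hab : a = b := by
    rw [hQeq] at heq; linarith
  subst hab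
  have hdvdXY : (n:ℤ) ∣ Y - X := Int.ModEq.dvd hQeq
  have : Y - X = (j - i) * t := by rw [hX, hY]; ring
  rw [this] at hdvdXY
  have hij : (n:ℤ) ∣ j - i := dvd_of_mul_inv hst hdvdXY
  have : i = j := by
    rcases hij with ⟨c, hc⟩
    have hc0 : c = 0 := by nlinarith
    rw [hc0, mul_zero] at hc
    omega
  rw [this]



lemma arc_elim (m n : ℕ) (k : ℤ) {e : (ℤ×ℤ)×(ℤ×ℤ)}
    (he : e ∈ prodArcs (forwardCycle m)
      (fun ab => if ab.1 ≤ k then forwardCycle n else backwardCycle n)) :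
    ∃ a i j, e = ((a, i), ((if a = (m:ℤ) then 1 else a + 1), j)) ∧
      1 ≤ a ∧ a ≤ (m:ℤ) ∧ 1 ≤ i ∧ i ≤ (n:ℤ) ∧ 1 ≤ j ∧ j ≤ (n:ℤ) ∧
      ((a ≤ k ∧ (j = i + 1 ∨ (i = (n:ℤ) ∧ j = 1))) ∨
       (k < a ∧ (i = j + 1 ∨ (j = (n:ℤ) ∧ i = 1)))) := by
  rw [prodArcs, Finset.mem_biUnion] at he
  obtain ⟨⟨a, b⟩, hab, he⟩ := he
  rw [Finset.mem_image] at he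
  obtain ⟨⟨i, j⟩, hij, rfl⟩ := he
  rw [mem_fwd] at hab
  obtain ⟨⟨ha1, ha2⟩, hb⟩ := hab
  simp only at hij hb
  refine ⟨a, i, j, by rw [hb], ha1, ha2, ?_⟩
  by_cases hk : a ≤ k
  · rw [if_pos hk, mem_fwd] at hij
    obtain ⟨⟨hi1, hi2⟩, hj⟩ := hij
    refine ⟨hi1, hi2, ?_, ?_, Or.inl ⟨hk, ?_⟩⟩ <;> split_ifs at hj <;> omega
  · rw [if_neg hk, mem_bwd] at hij
    obtain ⟨⟨hj1, hj2⟩, hi⟩ := hij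
    refine ⟨?_, ?_, hj1, hj2, Or.inr ⟨by omega, ?_⟩⟩ <;> split_ifs at hi <;> omega



lemma card_prodArcs (m n : ℕ) (k : ℤ) :
    (prodArcs (forwardCycle m)
      (fun ab => if ab.1 ≤ k then forwardCycle n else backwardCycle n)).card = m * n := by
  rw [prodArcs, Finset.card_biUnion]
  · have hone : ∀ ab ∈ forwardCycle m,
        (((if ab.1 ≤ k then forwardCycle n else backwardCycle n)).image
          fun ij => ((ab.1, ij.1), (ab.2, ij.2))).card = n := by
      intro ab _
      rw [Finset.card_image_of_injOn]
      · by_cases hk : ab.1 ≤ k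
        · rw [if_pos hk, card_fwd]
        · rw [if_neg hk, card_bwd]
      · rintro ⟨x1, x2⟩ _ ⟨y1, y2⟩ _ hxy
        simp only [Prod.mk.injEq] at hxy
        simp [hxy.1.2, hxy.2.2]
    rw [Finset.sum_congr rfl hone, Finset.sum_const, card_fwd, smul_eq_mul]
  · rintro ⟨a, b⟩ hab ⟨a', b'⟩ hab' hne
    simp only [Function.onFun, Finset.mem_coe] at hab hab' ⊢
    rw [Finset.disjoint_left]
    rintro x hx hx'
    rw [Finset.mem_image] at hx hx'
    obtain ⟨ij, _, rfl⟩ := hx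
    obtain ⟨ij', _, heq⟩ := hx'
    have h11 : a' = a := congrArg (fun z => z.1.1) heq
    rw [mem_fwd] at hab hab'
    exact hne (by rw [Prod.mk.injEq]; exact ⟨h11.symm, by rw [hab'.2, hab.2, h11]⟩)



lemma master (m n : ℕ) (k t : ℤ) (hm : 3 ≤ m) (hn : 3 ≤ n) (hk0 : 0 ≤ k)
    (hkm : k ≤ (m:ℤ)) (hst : (n:ℤ) ∣ (2*k - m) * t - 1) :
    ∃ h : ℤ × ℤ → Finset (ℤ × ℤ),
      (∀ a ∈ forwardCycle m, h a = forwardCycle n ∨ h a = backwardCycle n) ∧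
      DigraphIso
        (Finset.Icc (1 : ℤ) (m : ℤ) ×ˢ Finset.Icc (1 : ℤ) (n : ℤ))
        (prodArcs (forwardCycle m) h)
        (Finset.Icc (1 : ℤ) ((m * n : ℕ) : ℤ))
        (forwardCycle (m * n)) := by
  have hN : (0:ℤ) < (n:ℤ) := by exact_mod_cast by omega
  have hM : (0:ℤ) < (m:ℤ) := by exact_mod_cast by omega
  have hMN : ((m * n : ℕ) : ℤ) = (m:ℤ) * (n:ℤ) := by push_cast; ring
  refine ⟨fun ab => if ab.1 ≤ k then forwardCycle n else backwardCycle n, ?_, ?_⟩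
  · intro a _
    by_cases hk : a.1 ≤ k
    · exact Or.inl (by simp [hk])
    · exact Or.inr (by simp [hk])
  · refine ⟨phi m n k t, phi_injOn m n k t hm hn hst, ?_, ?_⟩
    · -- vertex image
      have hmem : ∀ p ∈ Finset.Icc (1:ℤ) (m:ℤ) ×ˢ Finset.Icc (1:ℤ) (n:ℤ),
          phi m n k t p ∈ Finset.Icc (1:ℤ) ((m * n : ℕ) : ℤ) := by
        rintro ⟨a, i⟩ hp
        rw [Finset.mem_product, Finset.mem_Icc, Finset.mem_Icc] at hp
        obtain ⟨⟨ha1, ha2⟩, hi1, hi2⟩ := hp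
        rw [Finset.mem_Icc, hMN]
        simp only [phi]
        set Q := (i - 1 - gf k a) * t % (n:ℤ) with hQ
        have hQ0 : 0 ≤ Q := Int.emod_nonneg _ hN.ne'
        have hQ1 : Q ≤ (n:ℤ) - 1 := by
          have := Int.emod_lt_of_pos ((i - 1 - gf k a) * t) hN; omega
        constructor
        · nlinarith
        · nlinarith
      apply Finset.eq_of_subset_of_card_le
      · intro x hx
        rw [Finset.mem_image] at hx
        obtain ⟨p, hp, rfl⟩ := hx
        exact hmem p hp
      · rw [Finset.card_image_of_injOn (phi_injOn m n k t hm hn hst),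
          Finset.card_product, Int.card_Icc, Int.card_Icc, Int.card_Icc]
        simp
    · -- arc image
      have hmemV : ∀ a i : ℤ, 1 ≤ a → a ≤ (m:ℤ) → 1 ≤ i → i ≤ (n:ℤ) →
          1 ≤ phi m n k t (a, i) ∧ phi m n k t (a, i) ≤ (m:ℤ) * (n:ℤ) := by
        intro a i ha1 ha2 hi1 hi2
        simp only [phi]
        set Q := (i - 1 - gf k a) * t % (n:ℤ) with hQ
        have hQ0 : 0 ≤ Q := Int.emod_nonneg _ hN.ne'
        have hQ1 : Q ≤ (n:ℤ) - 1 := by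
          have := Int.emod_lt_of_pos ((i - 1 - gf k a) * t) hN; omega
        constructor
        · nlinarith
        · nlinarith
      apply Finset.eq_of_subset_of_card_le
      · intro x hx
        rw [Finset.mem_image] at hx
        obtain ⟨e, he, rfl⟩ := hx
        obtain ⟨a, i, j, rfl, ha1, ha2, hi1, hi2, hj1, hj2, hrel⟩ := arc_elim m n k he
        have hstep := phi_step m n k t hm hn hk0 hkm hst a i j ha1 ha2 hi1 hi2 hrel
        have hb := hmemV a i ha1 ha2 hi1 hi2
        show (phi m n k t (a, i), phi m n k t _) ∈ forwardCycle (m * n)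
        rw [mem_fwd, hMN]
        exact ⟨hb, by rw [hstep]⟩
      · rw [card_fwd]
        have hinj : Set.InjOn (Prod.map (phi m n k t) (phi m n k t))
            ↑(prodArcs (forwardCycle m)
              (fun ab => if ab.1 ≤ k then forwardCycle n else backwardCycle n)) := by
          intro e he e' he' heq
          obtain ⟨a, i, j, rfl, ha1, ha2, hi1, hi2, hj1, hj2, _⟩ := arc_elim m n k he
          obtain ⟨a', i', j', rfl, ha1', ha2', hi1', hi2', hj1', hj2', _⟩ := arc_elim m n k he'
          have h1 : phi m n k t (a, i) = phi m n k t (a', i') :=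
            congrArg (fun z => z.1) heq
          have h2 : phi m n k t (if a = (m:ℤ) then 1 else a + 1, j)
              = phi m n k t (if a' = (m:ℤ) then 1 else a' + 1, j') :=
            congrArg (fun z => z.2) heq
          have hVmem : ∀ a i : ℤ, 1 ≤ a → a ≤ (m:ℤ) → 1 ≤ i → i ≤ (n:ℤ) →
              (a, i) ∈ (↑(Finset.Icc (1:ℤ) (m:ℤ) ×ˢ Finset.Icc (1:ℤ) (n:ℤ)) :
                Set (ℤ × ℤ)) := by
            intro a i h1 h2 h3 h4
            rw [Finset.mem_coe, Finset.mem_product, Finset.mem_Icc, Finset.mem_Icc]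
            exact ⟨⟨h1, h2⟩, h3, h4⟩
          have e1 : (a, i) = (a', i') :=
            phi_injOn m n k t hm hn hst (hVmem a i ha1 ha2 hi1 hi2)
              (hVmem a' i' ha1' ha2' hi1' hi2') h1
          have e2 : ((if a = (m:ℤ) then 1 else a + 1 : ℤ), j)
              = ((if a' = (m:ℤ) then 1 else a' + 1 : ℤ), j') := by
            exact phi_injOn m n k t hm hn hst
              (hVmem _ _ (by split_ifs <;> omega) (by split_ifs <;> omega) hj1 hj2)
              (hVmem _ _ (by split_ifs <;> omega) (by split_ifs <;> omega) hj1' hj2') h2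
          rw [Prod.mk.injEq] at e1 e2
          rw [Prod.mk.injEq, Prod.mk.injEq, Prod.mk.injEq]
          exact ⟨⟨e1.1, e1.2⟩, e2.1, e2.2⟩
        rw [Finset.card_image_of_injOn hinj, card_prodArcs]




theorem stmt16 (m n : ℕ) (hn3 : 3 ≤ n) (hnodd : Odd n) (hm3 : 3 ≤ m)
    (hcond : Odd m ∨ n ≤ m) :
    ∃ h : ℤ × ℤ → Finset (ℤ × ℤ),
      (∀ a ∈ forwardCycle m, h a = forwardCycle n ∨ h a = backwardCycle n) ∧
      DigraphIso
        (Finset.Icc (1 : ℤ) (m : ℤ) ×ˢ Finset.Icc (1 : ℤ) (n : ℤ))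
        (prodArcs (forwardCycle m) h)
        (Finset.Icc (1 : ℤ) ((m * n : ℕ) : ℤ))
        (forwardCycle (m * n)) := by
  obtain ⟨u, hu⟩ := hnodd
  rcases Nat.even_or_odd m with hme | hmo
  · -- m even, so n ≤ m
    have hnm : n ≤ m := hcond.resolve_left (by simpa using (Nat.not_odd_iff_even.mpr hme))
    obtain ⟨v, hv⟩ := hme
    have hmz : (m:ℤ) = (v:ℤ) + v := by exact_mod_cast hv
    have hnz : (n:ℤ) = 2*(u:ℤ) + 1 := by exact_mod_cast hu
    have hnmz : (n:ℤ) ≤ (m:ℤ) := by exact_mod_cast hnm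
    apply master m n ((v:ℤ) + u) ((n:ℤ) - 1) hm3 hn3
    · positivity
    · omega
    · refine ⟨(n:ℤ) - 2, ?_⟩
      rw [hmz, hnz]
      ring
  · obtain ⟨r, hr⟩ := hmo
    have hmz : (m:ℤ) = 2*(r:ℤ) + 1 := by exact_mod_cast hr
    apply master m n ((r:ℤ) + 1) 1 hm3 hn3
    · positivity
    · omega
    · have hz : (2*((r:ℤ)+1) - (m:ℤ)) * 1 - 1 = 0 := by rw [hmz]; ring
      rw [hz]
      exact dvd_zero _
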